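/- Let n ≥ 2 be an integer, α ∈ [0,n), let g : ℝⁿ → [0,∞) be locally integrable, let Ω ⊆ ℝⁿ be measurable, let ξ ∈ ℝⁿ, ρ > 0 and λ > 0. Suppose there exists z₂ ∈ Ω ∩ B_ρ(ξ) with M_α g(z₂) ≤ λ. Then for every δ ≥ 3^{n+1}, L^n({ζ ∈ Ω ∩ B_ρ(ξ) : M_α g(ζ) > δλ}) ≤ L^n({ζ ∈ Ω ∩ B_ρ(ξ) : M_α(χ_{B_{2ρ}(ξ)} g)(ζ) > δλ}), where χ_{B_{2ρ}(ξ)} denotes the indicator function of the ball B_{2ρ}(ξ). (In the paper this is applied with g = |∇u|^p for a weak solution u.) -/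

import Mathlib

open MeasureTheory ENNReal

/-- The fractional maximal function `M_α h (x) = sup_{ρ>0} ρ^α ⨍_{B_ρ(x)} |h|`,
valued in `ℝ≥0∞`. -/
noncomputable def fracMax (n : ℕ) (α : ℝ) (h : EuclideanSpace ℝ (Fin n) → ℝ)
    (x : EuclideanSpace ℝ (Fin n)) : ℝ≥0∞ :=
  ⨆ (ρ : ℝ) (_ : 0 < ρ),
    ENNReal.ofReal (ρ ^ α) * ⨍⁻ y in Metric.ball x ρ, ENNReal.ofReal |h y| ∂volume

/-- Level sets of `M_α g` above `δλ` inside `Ω ∩ B_ρ(ξ)` are controlled by level sets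
of the localized maximal function `M_α(χ_{B_{2ρ}(ξ)} g)`, provided `M_α g ≤ λ` at some
point of `Ω ∩ B_ρ(ξ)` and `δ ≥ 3^{n+1}`. -/
theorem levelset_fracMax_localize (n : ℕ) (hn : 2 ≤ n) (α : ℝ) (hα0 : 0 ≤ α) (hα : α < n)
    (g : EuclideanSpace ℝ (Fin n) → ℝ) (hg0 : ∀ x, 0 ≤ g x)
    (hgloc : MeasureTheory.LocallyIntegrable g volume)
    (Ω : Set (EuclideanSpace ℝ (Fin n))) (hΩ : MeasurableSet Ω)
    (ξ : EuclideanSpace ℝ (Fin n)) (ρ lam : ℝ) (hρ : 0 < ρ) (hlam : 0 < lam)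
    (z₂ : EuclideanSpace ℝ (Fin n)) (hz₂ : z₂ ∈ Ω ∩ Metric.ball ξ ρ)
    (hz₂M : fracMax n α g z₂ ≤ ENNReal.ofReal lam)
    (δ : ℝ) (hδ : 3 ^ (n + 1) ≤ δ) :
    volume {ζ ∈ Ω ∩ Metric.ball ξ ρ | ENNReal.ofReal (δ * lam) < fracMax n α g ζ}
      ≤ volume {ζ ∈ Ω ∩ Metric.ball ξ ρ |
          ENNReal.ofReal (δ * lam) < fracMax n α ((Metric.ball ξ (2 * ρ)).indicator g) ζ} := by
  apply measure_mono
  rintro ζ ⟨⟨hζΩ, hζB⟩, hζM⟩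
  refine ⟨⟨hζΩ, hζB⟩, ?_⟩
  obtain ⟨hz₂Ω, hz₂B⟩ := hz₂
  have hc0 : (0:ℝ) < (3:ℝ) ^ n := by positivity
  -- key bound for large radii
  have key : ∀ r : ℝ, ρ < r →
      ENNReal.ofReal (r ^ α) * ⨍⁻ y in Metric.ball ζ r, ENNReal.ofReal |g y| ∂volume
        ≤ ENNReal.ofReal (δ * lam) := by
    intro r hρr
    have hr : 0 < r := hρ.trans hρr
    have h3r : 0 < 3 * r := by linarith
    have hsub : Metric.ball ζ r ⊆ Metric.ball z₂ (3 * r) := by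
      intro y hy
      have h1 : dist y ζ < r := Metric.mem_ball.mp hy
      have h2 : dist ζ ξ < ρ := Metric.mem_ball.mp hζB
      have h3 : dist z₂ ξ < ρ := Metric.mem_ball.mp hz₂B
      have h4 : dist y z₂ ≤ dist y ζ + dist ζ ξ + dist ξ z₂ := dist_triangle4 y ζ ξ z₂
      rw [dist_comm ξ z₂] at h4
      rw [Metric.mem_ball]
      linarith
    set I : ℝ≥0∞ := ∫⁻ y in Metric.ball ζ r, ENNReal.ofReal |g y| ∂volume with hI
    set I' : ℝ≥0∞ := ∫⁻ y in Metric.ball z₂ (3 * r), ENNReal.ofReal |g y| ∂volume with hI'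
    have hII' : I ≤ I' := lintegral_mono_set hsub
    have hvol : volume (Metric.ball z₂ (3 * r))
        = ENNReal.ofReal ((3:ℝ) ^ n) * volume (Metric.ball ζ r) := by
      rw [Measure.addHaar_ball_mul_of_pos volume z₂ (by norm_num : (0:ℝ) < 3) r,
        Measure.addHaar_ball_center volume ζ r, finrank_euclideanSpace, Fintype.card_fin]
    set c : ℝ≥0∞ := ENNReal.ofReal ((3:ℝ) ^ n) with hc
    have hcne : c ≠ 0 := by simp [hc, hc0]
    have hctop : c ≠ ⊤ := ENNReal.ofReal_ne_top
    -- the term at radius 3r centered at z₂ is ≤ lam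
    have hterm3r : ENNReal.ofReal ((3 * r) ^ α) * (I' / volume (Metric.ball z₂ (3 * r)))
        ≤ ENNReal.ofReal lam := by
      refine le_trans ?_ hz₂M
      rw [← setLAverage_eq]
      exact le_iSup₂ (f := fun s (_ : 0 < s) => ENNReal.ofReal (s ^ α) *
        ⨍⁻ y in Metric.ball z₂ s, ENNReal.ofReal |g y| ∂volume) (3 * r) h3r
    have hdiv : c * (I' / volume (Metric.ball z₂ (3 * r))) = I' / volume (Metric.ball ζ r) := by
      rw [hvol, ← mul_div_assoc, ENNReal.mul_div_mul_left _ _ hcne hctop]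
    have hrpow : (r : ℝ) ^ α ≤ (3 * r) ^ α :=
      Real.rpow_le_rpow hr.le (by linarith) hα0
    rw [setLAverage_eq, ← hI]
    calc ENNReal.ofReal (r ^ α) * (I / volume (Metric.ball ζ r))
        ≤ ENNReal.ofReal (r ^ α) * (I' / volume (Metric.ball ζ r)) := by gcongr
      _ = ENNReal.ofReal (r ^ α) * (c * (I' / volume (Metric.ball z₂ (3 * r)))) := by
          rw [hdiv]
      _ ≤ ENNReal.ofReal ((3 * r) ^ α) * (c * (I' / volume (Metric.ball z₂ (3 * r)))) := by
          gcongr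
      _ = c * (ENNReal.ofReal ((3 * r) ^ α) * (I' / volume (Metric.ball z₂ (3 * r)))) := by
          ring
      _ ≤ c * ENNReal.ofReal lam := by gcongr
      _ = ENNReal.ofReal ((3:ℝ) ^ n * lam) := by rw [← ENNReal.ofReal_mul hc0.le]
      _ ≤ ENNReal.ofReal (δ * lam) := by
          apply ENNReal.ofReal_le_ofReal
          have h1 : (3:ℝ) ^ n ≤ 3 ^ (n + 1) := by
            apply pow_le_pow_right₀ (by norm_num) (Nat.le_succ n)
          nlinarith
  -- extract a radius witnessing the strict inequality
  simp only [fracMax, lt_iSup_iff] at hζM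
  obtain ⟨r, hr0, hterm⟩ := hζM
  have hrρ : r ≤ ρ := by
    by_contra h
    push_neg at h
    exact absurd (key r h) (not_le.mpr hterm)
  have hsub2 : Metric.ball ζ r ⊆ Metric.ball ξ (2 * ρ) := by
    intro y hy
    have h1 : dist y ζ < r := Metric.mem_ball.mp hy
    have h2 : dist ζ ξ < ρ := Metric.mem_ball.mp hζB
    have h4 : dist y ξ ≤ dist y ζ + dist ζ ξ := dist_triangle y ζ ξ
    rw [Metric.mem_ball]
    linarith
  have hcongr : ∫⁻ y in Metric.ball ζ r, ENNReal.ofReal |(Metric.ball ξ (2 * ρ)).indicator g y| ∂volume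
      = ∫⁻ y in Metric.ball ζ r, ENNReal.ofReal |g y| ∂volume := by
    refine setLIntegral_congr_fun measurableSet_ball (fun y hy => ?_)
    rw [Set.indicator_of_mem (hsub2 hy)]
  calc ENNReal.ofReal (δ * lam)
      < ENNReal.ofReal (r ^ α) * ⨍⁻ y in Metric.ball ζ r, ENNReal.ofReal |g y| ∂volume := hterm
    _ = ENNReal.ofReal (r ^ α) *
        ⨍⁻ y in Metric.ball ζ r, ENNReal.ofReal |(Metric.ball ξ (2 * ρ)).indicator g y| ∂volume := by
        rw [setLAverage_eq, setLAverage_eq, hcongr]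
    _ ≤ fracMax n α ((Metric.ball ξ (2 * ρ)).indicator g) ζ :=
        le_iSup₂ (f := fun s (_ : 0 < s) => ENNReal.ofReal (s ^ α) *
          ⨍⁻ y in Metric.ball ζ s, ENNReal.ofReal |(Metric.ball ξ (2 * ρ)).indicator g y| ∂volume)
          r hr0
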